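/- Let 0 < ε ≤ x₀, suppose 1 + b(x) ≠ 0 on [−ε, ε], and let t : [−ε, ε] → ℝ be differentiable and satisfy the differential equation t'(x) = ((1 + a(x))/(1 + b(x)))·(1 − 2φ''(x)·t(x))/√(1 + φ'(x)²). Then for every x ∈ [−ε, ε], d/dx W(x, t(x)) = [(1 − 2φ''(x)·t(x))·√(1 + φ'(x)²)/(1 + b(x))]·(τ₁(x) + τ₂(0)). Consequently, at every x where 1 − 2φ''(x)·t(x) ≠ 0 (so the tangent vector is nonzero), the reflection of τ₁(x) across the line spanned by d/dx W(x, t(x)) equals τ₂(0). -/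

import Mathlib

/-- The standard inner product on `ℝ × ℝ`. -/
def dot2 (u v : ℝ × ℝ) : ℝ := u.1 * v.1 + u.2 * v.2

/-- Reflection of a vector `u` across the line spanned by a (nonzero) vector `w`:
`refl_w(u) = 2(⟨u,w⟩/⟨w,w⟩)·w − u`. -/
noncomputable def reflAcross (w u : ℝ × ℝ) : ℝ × ℝ := (2 * (dot2 u w / dot2 w w)) • w - u

/-- `τ₁(x) = (−2φ'(x), 1 − φ'(x)²)/(1 + φ'(x)²)`. -/
noncomputable def tau1 (φ' : ℝ → ℝ) (x : ℝ) : ℝ × ℝ :=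
  (1 / (1 + (φ' x) ^ 2)) • (-2 * φ' x, 1 - (φ' x) ^ 2)

/-- `τ₂(x) = (1, φ'(x))/√(1 + φ'(x)²)`. -/
noncomputable def tau2 (φ' : ℝ → ℝ) (x : ℝ) : ℝ × ℝ :=
  (1 / Real.sqrt (1 + (φ' x) ^ 2)) • (1, φ' x)

/-- `W(x,t) = (x, φ(x)) + t·(−2φ'(x), 1 − φ'(x)²)`. -/
noncomputable def Wmap (φ φ' : ℝ → ℝ) (x t : ℝ) : ℝ × ℝ :=
  (x, φ x) + t • (-2 * φ' x, 1 - (φ' x) ^ 2)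

lemma refl_aux (u v : ℝ × ℝ) (c : ℝ) (hc : c ≠ 0) (hu : dot2 u u = 1) (hv : dot2 v v = 1)
    (huv : u + v ≠ 0) : c • (u + v) ≠ 0 ∧ reflAcross (c • (u + v)) u = v := by
  obtain ⟨u1, u2⟩ := u
  obtain ⟨v1, v2⟩ := v
  simp only [dot2] at hu hv
  have hne : ¬(u1 + v1 = 0 ∧ u2 + v2 = 0) := by
    intro ⟨h1, h2⟩; exact huv (by simp [Prod.ext_iff, Prod.add_def, h1, h2])
  have hpos : 0 < (u1 + v1) ^ 2 + (u2 + v2) ^ 2 := by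
    rcases not_and_or.mp hne with h | h <;> positivity
  constructor
  · simp only [Prod.smul_def, Prod.add_def, Prod.ext_iff, ne_eq, Prod.mk.injEq, smul_eq_mul,
      Prod.fst_zero, Prod.snd_zero]
    intro ⟨h1, h2⟩
    exact hne ⟨by rcases mul_eq_zero.mp h1 with h|h; exact absurd h hc; exact h,
               by rcases mul_eq_zero.mp h2 with h|h; exact absurd h hc; exact h⟩
  · simp only [reflAcross, dot2, Prod.smul_def, Prod.add_def, smul_eq_mul, Prod.ext_iff,
      Prod.mk.injEq, Prod.sub_def]
    have hd : (c * (u1 + v1)) * (c * (u1 + v1)) + (c * (u2 + v2)) * (c * (u2 + v2)) ≠ 0 := by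
      have : (c * (u1 + v1)) * (c * (u1 + v1)) + (c * (u2 + v2)) * (c * (u2 + v2))
          = c ^ 2 * ((u1 + v1) ^ 2 + (u2 + v2) ^ 2) := by ring
      rw [this]; positivity
    constructor
    · field_simp
      linear_combination (u1 + v1) * hu - (u1 + v1) * hv
    · field_simp
      linear_combination (u2 + v2) * hu - (u2 + v2) * hv


/-- If `t` satisfies the ODE `t' = ((1+a)/(1+b))·(1 − 2φ''t)/√(1+φ'²)`, then
`d/dx W(x,t(x)) = [(1 − 2φ''(x)t(x))√(1+φ'(x)²)/(1+b(x))]·(τ₁(x) + τ₂(0))`, and where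
`1 − 2φ''(x)t(x) ≠ 0` this tangent vector is nonzero and reflects `τ₁(x)` to `τ₂(0)`. -/
theorem reflecting_curve_reflects_to_fixed_direction (x₀ ε : ℝ) (hx₀ : 0 < x₀)
    (hε : 0 < ε) (hεx₀ : ε ≤ x₀) (φ φ' φ'' φ''' a b t : ℝ → ℝ)
    (hφ : ∀ x ∈ Set.Icc (-x₀) x₀, HasDerivAt φ (φ' x) x)
    (hφ' : ∀ x ∈ Set.Icc (-x₀) x₀, HasDerivAt φ' (φ'' x) x)
    (hφ'' : ∀ x ∈ Set.Icc (-x₀) x₀, HasDerivAt φ'' (φ''' x) x)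
    (hφ'''c : ContinuousOn φ''' (Set.Icc (-x₀) x₀))
    (hconv : ∀ x ∈ Set.Icc (-x₀) x₀, 0 < φ'' x)
    (hab : ∀ x ∈ Set.Icc (-x₀) x₀,
      tau2 φ' 0 = a x • tau1 φ' x + (1 + b x) • tau2 φ' x)
    (hb : ∀ x ∈ Set.Icc (-ε) ε, 1 + b x ≠ 0)
    (hode : ∀ x ∈ Set.Icc (-ε) ε,
      HasDerivAt t
        (((1 + a x) / (1 + b x)) * (1 - 2 * φ'' x * t x) / Real.sqrt (1 + (φ' x) ^ 2)) x) :
    ∀ x ∈ Set.Icc (-ε) ε,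
      HasDerivAt (fun s => Wmap φ φ' s (t s))
        (((1 - 2 * φ'' x * t x) * Real.sqrt (1 + (φ' x) ^ 2) / (1 + b x))
          • (tau1 φ' x + tau2 φ' 0)) x ∧
      (1 - 2 * φ'' x * t x ≠ 0 →
        ((1 - 2 * φ'' x * t x) * Real.sqrt (1 + (φ' x) ^ 2) / (1 + b x))
            • (tau1 φ' x + tau2 φ' 0) ≠ 0 ∧
        reflAcross
          (((1 - 2 * φ'' x * t x) * Real.sqrt (1 + (φ' x) ^ 2) / (1 + b x))
            • (tau1 φ' x + tau2 φ' 0)) (tau1 φ' x) = tau2 φ' 0) := by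
  intro x hx
  have hx0 : x ∈ Set.Icc (-x₀) x₀ := ⟨by linarith [hx.1], by linarith [hx.2]⟩
  have hbx := hb x hx
  have hps : (0:ℝ) < 1 + φ' x ^ 2 := by positivity
  have hs0 : 0 < Real.sqrt (1 + φ' x ^ 2) := Real.sqrt_pos.mpr hps
  have hs2 : Real.sqrt (1 + φ' x ^ 2) ^ 2 = 1 + φ' x ^ 2 := Real.sq_sqrt hps.le
  have hps0 : (0:ℝ) < 1 + φ' 0 ^ 2 := by positivity
  have hs00 : 0 < Real.sqrt (1 + φ' 0 ^ 2) := Real.sqrt_pos.mpr hps0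
  have hs20 : Real.sqrt (1 + φ' 0 ^ 2) ^ 2 = 1 + φ' 0 ^ 2 := Real.sq_sqrt hps0.le
  -- derivative of the pair function
  have h1 : HasDerivAt (fun y => y + t y * (-2 * φ' y))
      (1 + ((((1 + a x) / (1 + b x)) * (1 - 2 * φ'' x * t x) / Real.sqrt (1 + (φ' x) ^ 2))
        * (-2 * φ' x) + t x * (-2 * φ'' x))) x :=
    (hasDerivAt_id x).add ((hode x hx).mul ((hφ' x hx0).const_mul (-2:ℝ)))
  have h2pow : HasDerivAt (fun y => (1:ℝ) - φ' y ^ 2) (0 - 2 * φ' x ^ 1 * φ'' x) x :=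
    (hasDerivAt_const x (1:ℝ)).sub ((hφ' x hx0).pow 2)
  have h2 : HasDerivAt (fun y => φ y + t y * ((1:ℝ) - φ' y ^ 2))
      (φ' x + ((((1 + a x) / (1 + b x)) * (1 - 2 * φ'' x * t x) / Real.sqrt (1 + (φ' x) ^ 2))
        * (1 - φ' x ^ 2) + t x * (0 - 2 * φ' x ^ 1 * φ'' x))) x :=
    (hφ x hx0).add ((hode x hx).mul h2pow)
  have hfun : (fun y => Wmap φ φ' y (t y))
      = fun y => (y + t y * (-2 * φ' y), φ y + t y * ((1:ℝ) - φ' y ^ 2)) := by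
    funext y
    simp [Wmap, Prod.ext_iff, Prod.add_def, Prod.smul_def, smul_eq_mul]
  have hW := h1.prodMk h2
  rw [← hfun] at hW
  have hderiv : HasDerivAt (fun s => Wmap φ φ' s (t s))
      (((1 - 2 * φ'' x * t x) * Real.sqrt (1 + (φ' x) ^ 2) / (1 + b x))
        • (tau1 φ' x + tau2 φ' 0)) x := by
    convert hW using 1
    rw [hab x hx0]
    simp only [tau1, tau2, Prod.ext_iff, Prod.add_def, Prod.smul_def, smul_eq_mul,
      Prod.mk.injEq]
    have hsne : Real.sqrt (1 + φ' x ^ 2) ≠ 0 := hs0.ne'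
    generalize hSg : Real.sqrt (1 + φ' x ^ 2) = S at hs2 hsne ⊢
    rw [← hs2]
    constructor
    · field_simp
      ring
    · field_simp
      ring
  refine ⟨hderiv, fun hnz => ?_⟩
  have hc : (1 - 2 * φ'' x * t x) * Real.sqrt (1 + (φ' x) ^ 2) / (1 + b x) ≠ 0 :=
    div_ne_zero (mul_ne_zero hnz hs0.ne') hbx
  have hu1 : dot2 (tau1 φ' x) (tau1 φ' x) = 1 := by
    simp only [tau1, dot2, Prod.smul_def, smul_eq_mul]
    field_simp
    ring
  have hv1 : dot2 (tau2 φ' 0) (tau2 φ' 0) = 1 := by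
    simp only [tau2, dot2, Prod.smul_def, smul_eq_mul]
    have hne : Real.sqrt (1 + φ' 0 ^ 2) ≠ 0 := hs00.ne'
    generalize hSg : Real.sqrt (1 + φ' 0 ^ 2) = S at hs20 hne ⊢
    field_simp
    linarith [hs20]
  have hsum : tau1 φ' x + tau2 φ' 0 ≠ 0 := by
    intro hzero
    rw [hab x hx0] at hzero
    simp only [tau1, tau2, Prod.smul_def, smul_eq_mul, Prod.add_def, Prod.ext_iff,
      Prod.mk.injEq, Prod.fst_zero, Prod.snd_zero] at hzero
    obtain ⟨e1, e2⟩ := hzero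
    apply hbx
    have hne : Real.sqrt (1 + φ' x ^ 2) ≠ 0 := hs0.ne'
    generalize hSg : Real.sqrt (1 + φ' x ^ 2) = S at hs2 hne e1 e2
    rw [← hs2] at e1 e2
    field_simp at e1 e2
    have h6 : S ^ 6 * (1 + b x) = 0 := by
      linear_combination (S ^ 3 * (1 - φ' x ^ 2)) * e1 + (S ^ 3 * (2 * φ' x)) * e2 + ((1 + b x) * S ^ 4) * hs2
    rcases mul_eq_zero.mp h6 with h | h
    · exact absurd h (pow_ne_zero 6 hne)
    · exact h
  exact refl_aux (tau1 φ' x) (tau2 φ' 0) _ hc hu1 hv1 hsum
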